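/- Let λ, μ ∈ ℝ with μ ≠ 0 and λ/μ irrational, and let φ_t(z₁, z₂) = (e^{iλt} z₁, e^{iμt} z₂) be the flow on ℂ². Then for every point (z₁, z₂) ∈ ℂ² with z₁ ≠ 0 and z₂ ≠ 0, the ω-limit set ω(z₁, z₂) equals the torus {(w₁, w₂) ∈ ℂ² : |w₁| = |z₁| and |w₂| = |z₂|}. -/

import Mathlib

open Complex

/-- The dense-subgroup step: for irrational `θ` and `ε > 0` there are a positive natural `A`,
an integer `b` and a real `s` with `s ≠ 0`, `|s| < ε` and `A θ = s + b`. -/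
lemma step_exists {θ : ℝ} (hθ : Irrational θ) {ε : ℝ} (hε : 0 < ε) :
    ∃ (A : ℕ) (b : ℤ) (s : ℝ), 0 < A ∧ s ≠ 0 ∧ |s| < ε ∧ (A : ℝ) * θ = s + b := by
  set G : AddSubgroup ℝ := AddSubgroup.zmultiples 1 ⊔ AddSubgroup.zmultiples θ with hG
  have hmem : ∀ x ∈ G, ∃ m n : ℤ, (m : ℝ) + n * θ = x := by
    intro x hx
    rw [hG, AddSubgroup.mem_sup] at hx
    obtain ⟨y, hy, z, hz, rfl⟩ := hx
    obtain ⟨m, rfl⟩ := AddSubgroup.mem_zmultiples_iff.mp hy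
    obtain ⟨n, rfl⟩ := AddSubgroup.mem_zmultiples_iff.mp hz
    exact ⟨m, n, by push_cast [zsmul_eq_mul]; ring⟩
  have hdense : Dense (G : Set ℝ) := by
    rcases G.dense_or_cyclic with h | ⟨a, ha⟩
    · exact h
    · exfalso
      have h1 : (1 : ℝ) ∈ G := AddSubgroup.mem_sup_left (AddSubgroup.mem_zmultiples 1)
      have hθ' : θ ∈ G := AddSubgroup.mem_sup_right (AddSubgroup.mem_zmultiples θ)
      rw [ha] at h1 hθ'
      obtain ⟨m, hm⟩ := AddSubgroup.mem_closure_singleton.mp h1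
      obtain ⟨n, hn⟩ := AddSubgroup.mem_closure_singleton.mp hθ'
      have hm0 : (m : ℝ) ≠ 0 := by
        intro h
        rw [zsmul_eq_mul, h, zero_mul] at hm
        exact one_ne_zero hm.symm
      refine hθ ⟨(n : ℚ) / m, ?_⟩
      rw [zsmul_eq_mul] at hm hn
      push_cast
      have : θ * m = n * a * m := by rw [hn]
      field_simp
      have h2 : (n:ℝ) * a * m = n := by rw [mul_assoc, mul_comm a (m:ℝ), hm, mul_one]
      linarith [this, h2]
  set ε' := min ε 1 with hε'
  have hε'0 : 0 < ε' := lt_min hε one_pos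
  obtain ⟨g, hgG, hg⟩ := hdense.exists_mem_open isOpen_Ioo
    (Set.nonempty_Ioo.mpr (by linarith : (0:ℝ) < ε'))
  obtain ⟨m, n, rfl⟩ := hmem g hgG
  have hn0 : n ≠ 0 := by
    rintro rfl
    have : (m : ℝ) ∈ Set.Ioo (0:ℝ) ε' := by simpa using hg
    have h1 : (0:ℝ) < m := this.1
    have h2 : (m : ℝ) < 1 := this.2.trans_le (min_le_right _ _)
    have : 0 < m := by exact_mod_cast h1
    have : (1:ℝ) ≤ m := by exact_mod_cast this
    linarith
  set s := (m : ℝ) + n * θ with hs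
  have hs0 : 0 < s := hg.1
  have hsε : s < ε' := hg.2
  rcases lt_or_gt_of_ne hn0 with hneg | hpos
  · -- n < 0 : A = -n, A θ = -s + m
    refine ⟨(-n).toNat, m, -s, ?_, by simpa using ne_of_gt hs0, ?_, ?_⟩
    · simp [Int.lt_toNat]; omega
    · rw [abs_neg, abs_of_pos hs0]; exact hsε.trans_le (min_le_left _ _)
    · have : ((-n).toNat : ℝ) = -(n : ℝ) := by
        rw [← Int.cast_natCast, Int.toNat_of_nonneg (by omega)]; push_cast; ring
      rw [this, hs]; ring
  · -- n > 0 : A = n, A θ = s + (-m)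
    refine ⟨n.toNat, -m, s, ?_, ne_of_gt hs0, ?_, ?_⟩
    · simp [Int.lt_toNat]; omega
    · rw [abs_of_pos hs0]; exact hsε.trans_le (min_le_left _ _)
    · have : (n.toNat : ℝ) = (n : ℝ) := by
        rw [← Int.cast_natCast, Int.toNat_of_nonneg (by omega)]
      rw [this, hs]; push_cast; ring

/-- Stepping lemma: stepping by a small nonzero `s` from any point reaches any target mod 1. -/
lemma stepping {s ε : ℝ} (hs : s ≠ 0) (hsε : |s| < ε) (x c : ℝ) :
    ∃ (k : ℕ) (m : ℤ), |x + k * s - c - m| < ε := by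
  rcases hs.lt_or_gt with hneg | hpos
  · -- s < 0, choose m with c + m ≤ x, step down
    set m : ℤ := ⌊x - c⌋ with hm
    have hmle : (m : ℝ) ≤ x - c := Int.floor_le _
    set r := (c + m - x) / s with hr
    have hr0 : 0 ≤ r := by
      rw [hr]
      exact div_nonneg_of_nonpos (by linarith) hneg.le
    set k : ℕ := (⌊r⌋ + 1).toNat with hk
    have hkr : r < ((⌊r⌋ + 1).toNat : ℝ) ∧ ((⌊r⌋ + 1).toNat : ℝ) ≤ r + 1 := by
      have h1 : (0:ℤ) ≤ ⌊r⌋ + 1 := by have : (0:ℤ) ≤ ⌊r⌋ := Int.le_floor.mpr (by exact_mod_cast hr0); omega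
      have : (((⌊r⌋ + 1).toNat : ℤ) : ℝ) = ((⌊r⌋ : ℝ) + 1) := by
        rw [Int.toNat_of_nonneg h1]; push_cast; ring
      rw [← Int.cast_natCast, this]
      exact ⟨Int.lt_floor_add_one r, by linarith [Int.floor_le r]⟩
    refine ⟨k, m, ?_⟩
    have h1 : (k:ℝ) * s ≤ r * s := by
      apply mul_le_mul_of_nonpos_right hkr.1.le hneg.le
    have h2 : (r + 1) * s ≤ (k:ℝ) * s := mul_le_mul_of_nonpos_right hkr.2 hneg.le
    have hrs : r * s = c + m - x := by
      rw [hr, div_mul_cancel₀]; exact hs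
    rw [abs_lt]
    constructor
    · nlinarith [abs_lt.mp hsε]
    · nlinarith [abs_lt.mp hsε]
  · -- s > 0
    set m : ℤ := ⌈x - c⌉ with hm
    have hmge : x - c ≤ (m : ℝ) := Int.le_ceil _
    set r := (c + m - x) / s with hr
    have hr0 : 0 ≤ r := div_nonneg (by linarith) hpos.le
    set k : ℕ := (⌊r⌋ + 1).toNat with hk
    have hkr : r < ((⌊r⌋ + 1).toNat : ℝ) ∧ ((⌊r⌋ + 1).toNat : ℝ) ≤ r + 1 := by
      have h1 : (0:ℤ) ≤ ⌊r⌋ + 1 := by have : (0:ℤ) ≤ ⌊r⌋ := Int.le_floor.mpr (by exact_mod_cast hr0); omega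
      have : (((⌊r⌋ + 1).toNat : ℤ) : ℝ) = ((⌊r⌋ : ℝ) + 1) := by
        rw [Int.toNat_of_nonneg h1]; push_cast; ring
      rw [← Int.cast_natCast, this]
      exact ⟨Int.lt_floor_add_one r, by linarith [Int.floor_le r]⟩
    refine ⟨k, m, ?_⟩
    have h1 : r * s < (k:ℝ) * s := by
      apply mul_lt_mul_of_pos_right hkr.1 hpos
    have h2 : (k:ℝ) * s ≤ (r + 1) * s := mul_le_mul_of_nonneg_right hkr.2 hpos.le
    have hrs : r * s = c + m - x := by
      rw [hr, div_mul_cancel₀]; exact hs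
    rw [abs_lt]
    constructor
    · nlinarith [abs_lt.mp hsε]
    · nlinarith [abs_lt.mp hsε]

/-- Tail density of the irrational rotation orbit: for any `N`, `c`, `ε > 0` there is `n ≥ N`
with `n θ` within `ε` of `c` modulo 1. -/
lemma tail_dense {θ : ℝ} (hθ : Irrational θ) (c : ℝ) {ε : ℝ} (hε : 0 < ε) (N : ℕ) :
    ∃ (n : ℕ) (m : ℤ), N ≤ n ∧ |n * θ - m - c| < ε := by
  obtain ⟨A, b, s, hA, hs0, hsε, hAθ⟩ := step_exists hθ hε
  obtain ⟨k, m, hkm⟩ := stepping hs0 hsε ((N : ℝ) * θ) c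
  refine ⟨N + k * A, m + k * b, le_add_right le_rfl, ?_⟩
  have : ((N + k * A : ℕ) : ℝ) * θ = (N : ℝ) * θ + k * s + k * b := by
    push_cast
    nlinarith [hAθ]
  rw [this]
  push_cast
  convert hkm using 2
  ring

/-- Rotating by the angle difference of arguments carries `z` to `w` when they have equal moduli. -/
lemma rot_arg {w z : ℂ} (_hz : z ≠ 0) (h : ‖w‖ = ‖z‖) :
    Complex.exp ((w.arg - z.arg : ℝ) * Complex.I) * z = w := by
  have h1 := Complex.norm_mul_exp_arg_mul_I w
  have h2 := Complex.norm_mul_exp_arg_mul_I z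
  have he : ((w.arg - z.arg : ℝ) : ℂ) * Complex.I + (z.arg : ℂ) * Complex.I
      = (w.arg : ℂ) * Complex.I := by push_cast; ring
  calc Complex.exp ((w.arg - z.arg : ℝ) * Complex.I) * z
      = Complex.exp ((w.arg - z.arg : ℝ) * Complex.I)
        * ((‖z‖ : ℂ) * Complex.exp (z.arg * Complex.I)) := by rw [h2]
    _ = (‖z‖ : ℂ) * Complex.exp (((w.arg - z.arg : ℝ) : ℂ) * Complex.I
        + (z.arg : ℂ) * Complex.I) := by rw [Complex.exp_add]; ring
    _ = (‖w‖ : ℂ) * Complex.exp (w.arg * Complex.I) := by rw [he, h]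
    _ = w := h1

/-- The flow `φ_t(z₁, z₂) = (e^{iλt} z₁, e^{iμt} z₂)` on `ℂ²`. -/
noncomputable def hopfFlow (lam mu : ℝ) (t : ℝ) (z : ℂ × ℂ) : ℂ × ℂ :=
  (Complex.exp ((lam * t : ℝ) * Complex.I) * z.1,
    Complex.exp ((mu * t : ℝ) * Complex.I) * z.2)

/-- if `μ ≠ 0` and `λ/μ` is irrational, then for every `(z₁, z₂) ∈ ℂ²`
with `z₁ ≠ 0` and `z₂ ≠ 0`, the ω-limit set under `φ_t(z₁, z₂) = (e^{iλt} z₁, e^{iμt} z₂)`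
is the torus `{(w₁, w₂) : |w₁| = |z₁|, |w₂| = |z₂|}`. -/
theorem hopfFlow_omegaLimit_torus (lam mu : ℝ) (hmu : mu ≠ 0)
    (hirr : Irrational (lam / mu)) (z₁ z₂ : ℂ) (hz₁ : z₁ ≠ 0) (hz₂ : z₂ ≠ 0) :
    omegaLimit Filter.atTop (hopfFlow lam mu) {(z₁, z₂)} =
      {w : ℂ × ℂ | ‖w.1‖ = ‖z₁‖ ∧ ‖w.2‖ = ‖z₂‖} := by
  have hπ : (0:ℝ) < Real.pi := Real.pi_pos
  set θ : ℝ := lam / mu with hθdef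
  have hlam : lam = θ * mu := (div_mul_cancel₀ lam hmu).symm
  apply Set.Subset.antisymm
  · -- ω-limit set is contained in the torus
    have hclosed : IsClosed {w : ℂ × ℂ | ‖w.1‖ = ‖z₁‖ ∧
        ‖w.2‖ = ‖z₂‖} :=
      (isClosed_eq (continuous_norm.comp continuous_fst) continuous_const).inter
        (isClosed_eq (continuous_norm.comp continuous_snd) continuous_const)
    have h1 : omegaLimit Filter.atTop (hopfFlow lam mu) {(z₁, z₂)}
        ⊆ closure (Set.image2 (hopfFlow lam mu) Set.univ {(z₁, z₂)}) := by
      rw [omegaLimit_def]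
      exact Set.biInter_subset_of_mem Filter.univ_mem
    refine h1.trans (closure_minimal ?_ hclosed)
    rintro p ⟨t, -, z, hz, rfl⟩
    rw [Set.mem_singleton_iff] at hz
    subst hz
    constructor
    · show ‖Complex.exp ((lam * t : ℝ) * Complex.I) * z₁‖ = ‖z₁‖
      rw [norm_mul, Complex.norm_exp_ofReal_mul_I, one_mul]
    · show ‖Complex.exp ((mu * t : ℝ) * Complex.I) * z₂‖ = ‖z₂‖
      rw [norm_mul, Complex.norm_exp_ofReal_mul_I, one_mul]
  · -- the torus is contained in the ω-limit set
    rintro ⟨w₁, w₂⟩ ⟨hw₁, hw₂⟩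
    simp only at hw₁ hw₂
    set γ₁ : ℝ := w₁.arg - z₁.arg with hγ₁
    set γ₂ : ℝ := w₂.arg - z₂.arg with hγ₂
    have hw₁' : Complex.exp ((γ₁ : ℝ) * Complex.I) * z₁ = w₁ := rot_arg hz₁ hw₁
    have hw₂' : Complex.exp ((γ₂ : ℝ) * Complex.I) * z₂ = w₂ := rot_arg hz₂ hw₂
    rw [mem_omegaLimit_singleton_iff_map_cluster_point, mapClusterPt_iff_frequently]
    intro U hU
    rw [Filter.frequently_atTop]
    intro T
    obtain ⟨ε, hε, hball⟩ := Metric.mem_nhds_iff.mp hU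
    -- sign of mu
    set σ : ℤ := if 0 < mu then 1 else -1 with hσ
    have hσmu : (σ : ℝ) * mu = |mu| := by
      rcases lt_or_gt_of_ne hmu with h | h
      · rw [hσ, if_neg (by linarith), abs_of_neg h]; push_cast; ring
      · rw [hσ, if_pos h, abs_of_pos h]; push_cast; ring
    have hmuabs : 0 < |mu| := abs_pos.mpr hmu
    have hirr' : Irrational ((σ : ℝ) * θ) := by
      rcases lt_or_gt_of_ne hmu with h | h
      · rw [hσ, if_neg (by linarith)]; push_cast
        simpa [neg_one_mul] using hirr.neg
      · rw [hσ, if_pos h]; push_cast; simpa using hirr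
    -- choice of small quantities
    set a : ℝ := ‖z₁‖ with ha
    have ha0 : 0 < a := norm_pos_iff.mpr hz₁
    set δb : ℝ := min 1 (ε / (2 * (a + 1))) with hδb
    have hδb0 : 0 < δb := lt_min one_pos (by positivity)
    have hδb1 : δb ≤ 1 := min_le_left _ _
    set ε' : ℝ := δb / (2 * Real.pi) with hε'
    have hε'0 : 0 < ε' := by positivity
    set N : ℕ := ⌈(T - γ₂ / mu) * |mu| / (2 * Real.pi)⌉₊ with hN
    obtain ⟨n, m, hnN, hnm⟩ :=
      tail_dense hirr' ((γ₁ - θ * γ₂) / (2 * Real.pi)) hε'0 N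
    set j : ℤ := σ * n with hj
    set t : ℝ := (γ₂ + 2 * Real.pi * ((σ : ℝ) * n)) / mu with htdef
    have hmut : mu * t = γ₂ + 2 * Real.pi * ((σ : ℝ) * n) := by
      rw [htdef]; field_simp
    have htT : T ≤ t := by
      have h1 : (T - γ₂ / mu) * |mu| / (2 * Real.pi) ≤ (N : ℝ) := Nat.le_ceil _
      have h2 : (N : ℝ) ≤ (n : ℝ) := by exact_mod_cast hnN
      have h3 : (T - γ₂ / mu) * |mu| ≤ 2 * Real.pi * n := by
        rw [div_le_iff₀ (by positivity)] at h1
        nlinarith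
      have hσσ : ((σ : ℝ)) ^ 2 = 1 := by
        rw [hσ]; split_ifs <;> norm_num
      have ht' : t = γ₂ / mu + 2 * Real.pi * (n : ℝ) / |mu| := by
        rw [htdef, ← hσmu]
        have hσ0 : (σ : ℝ) ≠ 0 := by
          intro h
          rw [h, zero_mul] at hσmu
          exact hmuabs.ne hσmu
        field_simp
        linear_combination (2 * Real.pi * (n : ℝ)) * hσσ
      rw [ht']
      have h4 : T - γ₂ / mu ≤ 2 * Real.pi * (n : ℝ) / |mu| := by
        rw [le_div_iff₀ hmuabs]; exact h3
      linarith
    -- second coordinate is hit exactly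
    have hc2 : Complex.exp ((mu * t : ℝ) * Complex.I) * z₂ = w₂ := by
      have he : ((mu * t : ℝ) : ℂ) * Complex.I
          = (γ₂ : ℂ) * Complex.I + (j : ℂ) * (2 * (Real.pi : ℂ) * Complex.I) := by
        rw [hmut, hj]; push_cast; ring
      rw [he, Complex.exp_add, Complex.exp_int_mul_two_pi_mul_I, mul_one, hw₂']
    -- first coordinate
    set δ : ℝ := lam * t - γ₁ - 2 * Real.pi * m with hδdef
    have hδsmall : |δ| < δb := by
      have hlamt : lam * t = θ * γ₂ + 2 * Real.pi * ((n : ℝ) * ((σ : ℝ) * θ)) := by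
        rw [hlam, mul_assoc, hmut]; ring
      have : δ = 2 * Real.pi * ((n : ℝ) * ((σ : ℝ) * θ) - m
          - (γ₁ - θ * γ₂) / (2 * Real.pi)) := by
        rw [hδdef, hlamt]; field_simp; ring
      rw [this, abs_mul, abs_of_pos (by positivity : (0:ℝ) < 2 * Real.pi)]
      calc 2 * Real.pi * |(n : ℝ) * ((σ : ℝ) * θ) - m - (γ₁ - θ * γ₂) / (2 * Real.pi)|
          < 2 * Real.pi * ε' := by
            apply mul_lt_mul_of_pos_left hnm (by positivity)
        _ = δb := by rw [hε']; field_simp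
    have hc1 : Complex.exp ((lam * t : ℝ) * Complex.I) * z₁
        = Complex.exp ((δ : ℝ) * Complex.I) * w₁ := by
      have he : ((lam * t : ℝ) : ℂ) * Complex.I
          = (δ : ℂ) * Complex.I + (γ₁ : ℂ) * Complex.I
            + (m : ℂ) * (2 * (Real.pi : ℂ) * Complex.I) := by
        rw [hδdef]; push_cast; ring
      rw [he, Complex.exp_add, Complex.exp_add, Complex.exp_int_mul_two_pi_mul_I, mul_one,
        mul_assoc, hw₁']
    refine ⟨t, htT, hball ?_⟩
    rw [Metric.mem_ball, Prod.dist_eq, max_lt_iff]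
    constructor
    · show dist (Complex.exp ((lam * t : ℝ) * Complex.I) * z₁) w₁ < ε
      rw [hc1, Complex.dist_eq]
      have hfactor : Complex.exp ((δ : ℝ) * Complex.I) * w₁ - w₁
          = (Complex.exp ((δ : ℝ) * Complex.I) - 1) * w₁ := by ring
      rw [hfactor, norm_mul]
      have habsδ : ‖(δ : ℂ) * Complex.I‖ = |δ| := by
        rw [norm_mul, Complex.norm_I, Complex.norm_real, Real.norm_eq_abs, mul_one]
      have hexp : ‖Complex.exp ((δ : ℝ) * Complex.I) - 1‖ ≤ 2 * |δ| := by
        have := Complex.norm_exp_sub_one_le (x := (δ : ℂ) * Complex.I)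
          (by rw [habsδ]; exact (hδsmall.le.trans hδb1))
        rwa [habsδ] at this
      have hw₁a : ‖w₁‖ = a := hw₁
      rw [hw₁a]
      have h2a : (0:ℝ) < 2 * (a + 1) := by positivity
      have hδb2 : δb * (2 * (a + 1)) ≤ ε := by
        calc δb * (2 * (a + 1)) ≤ (ε / (2 * (a + 1))) * (2 * (a + 1)) :=
              mul_le_mul_of_nonneg_right (min_le_right _ _) h2a.le
          _ = ε := div_mul_cancel₀ _ h2a.ne'
      have e1 : ‖Complex.exp ((δ : ℝ) * Complex.I) - 1‖ * a ≤ 2 * |δ| * a :=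
        mul_le_mul_of_nonneg_right hexp ha0.le
      nlinarith [abs_nonneg δ]
    · show dist (Complex.exp ((mu * t : ℝ) * Complex.I) * z₂) w₂ < ε
      rw [hc2, dist_self]
      exact hε
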